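/- Let 0 < γ < 1 and W : ℝ² → ℝ², W(x,y) = (γxy, (1−γ)xy). For any initial point z⁽⁰⁾ = (x⁽⁰⁾, y⁽⁰⁾) ∈ ℝ²: (i) if |x⁽⁰⁾y⁽⁰⁾| < 1/(γ(1−γ)) then W^t(z⁽⁰⁾) → (0,0) as t → ∞; (ii) if |x⁽⁰⁾y⁽⁰⁾| = 1/(γ(1−γ)) then W^t(z⁽⁰⁾) → (1/(1−γ), 1/γ); (iii) if |x⁽⁰⁾y⁽⁰⁾| > 1/(γ(1−γ)) then both coordinates of W^t(z⁽⁰⁾) tend to +∞. Moreover, if x⁽⁰⁾y⁽⁰⁾ ≠ 0, then for every t ≥ 1 the normalized iterate satisfies W^t(z⁽⁰⁾)/ϖ(W^t(z⁽⁰⁾)) = (γ, 1−γ), where ϖ(x,y) = x + y. -/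

import Mathlib

/-- The gonosomal operator of the algebra `ℝ⟨e,ẽ⟩`, `e·ẽ = γe + (1−γ)ẽ`:
`W(x,y) = (γxy, (1−γ)xy)`. -/
noncomputable def gonW2 (γ : ℝ) (p : ℝ × ℝ) : ℝ × ℝ :=
  (γ * p.1 * p.2, (1 - γ) * p.1 * p.2)

lemma gonW2_iter (γ : ℝ) (h0 : 0 < γ) (h1 : γ < 1) (z : ℝ × ℝ) (n : ℕ) :
    (gonW2 γ)^[n+1] z =
      ((γ*(1-γ)*(z.1*z.2))^(2^n)/(1-γ), (γ*(1-γ)*(z.1*z.2))^(2^n)/γ) := by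
  have hγ : γ ≠ 0 := h0.ne'
  have hγ1 : (1:ℝ) - γ ≠ 0 := by linarith
  induction n with
  | zero =>
    rw [zero_add, Function.iterate_one]
    simp only [pow_zero, pow_one, gonW2, Prod.mk.injEq]
    constructor <;> field_simp <;> try ring
  | succ n ih =>
    rw [Function.iterate_succ_apply', ih]
    simp only [gonW2]
    have h2 : (γ*(1-γ)*(z.1*z.2))^(2^(n+1)) = ((γ*(1-γ)*(z.1*z.2))^(2^n))^2 := by
      rw [← pow_mul, pow_succ]
    rw [h2, Prod.mk.injEq]
    constructor <;> field_simp <;> try ring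

/-- Asymptotic behavior of the trajectories of `W(x,y) = (γxy, (1−γ)xy)`,
`0 < γ < 1`, and stationarity of the normalized trajectories. -/
theorem gonosomal2_trajectories (γ : ℝ) (h0 : 0 < γ) (h1 : γ < 1)
    (z : ℝ × ℝ) :
    (|z.1 * z.2| < 1 / (γ * (1 - γ)) →
      Filter.Tendsto (fun t => (gonW2 γ)^[t] z) Filter.atTop
        (nhds ((0, 0) : ℝ × ℝ))) ∧
    (|z.1 * z.2| = 1 / (γ * (1 - γ)) →
      Filter.Tendsto (fun t => (gonW2 γ)^[t] z) Filter.atTop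
        (nhds ((1 / (1 - γ), 1 / γ) : ℝ × ℝ))) ∧
    (1 / (γ * (1 - γ)) < |z.1 * z.2| →
      Filter.Tendsto (fun t => ((gonW2 γ)^[t] z).1) Filter.atTop Filter.atTop ∧
      Filter.Tendsto (fun t => ((gonW2 γ)^[t] z).2) Filter.atTop Filter.atTop) ∧
    (z.1 * z.2 ≠ 0 → ∀ t : ℕ, 1 ≤ t →
      (((gonW2 γ)^[t] z).1 + ((gonW2 γ)^[t] z).2)⁻¹ • (gonW2 γ)^[t] z =
        ((γ, 1 - γ) : ℝ × ℝ)) := by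
  have hγ : γ ≠ 0 := h0.ne'
  have hγ1 : (1:ℝ) - γ ≠ 0 := by linarith
  have hc : 0 < γ * (1 - γ) := by nlinarith
  set a : ℝ := γ * (1 - γ) * (z.1 * z.2) with ha
  have habs : |a| = γ * (1 - γ) * |z.1 * z.2| := by
    rw [ha, abs_mul, abs_of_pos hc]
  have h2pow : Filter.Tendsto (fun n : ℕ => 2 ^ n) Filter.atTop Filter.atTop :=
    tendsto_pow_atTop_atTop_of_one_lt one_lt_two
  refine ⟨?_, ?_, ?_, ?_⟩
  · -- case |u| < 1/c  ⟹  |a| < 1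
    intro h
    have hlt : |a| < 1 := by
      rw [habs]
      calc γ * (1 - γ) * |z.1 * z.2| < γ * (1 - γ) * (1 / (γ * (1 - γ))) := by
            exact mul_lt_mul_of_pos_left h hc
        _ = 1 := by field_simp
    rw [← Filter.tendsto_add_atTop_iff_nat 1]
    have hpow : Filter.Tendsto (fun n : ℕ => a ^ (2 ^ n)) Filter.atTop (nhds 0) :=
      (tendsto_pow_atTop_nhds_zero_of_abs_lt_one hlt).comp h2pow
    have h1' : Filter.Tendsto (fun n : ℕ => a ^ (2 ^ n) / (1 - γ)) Filter.atTop (nhds 0) := by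
      simpa using hpow.div_const (1 - γ)
    have h2' : Filter.Tendsto (fun n : ℕ => a ^ (2 ^ n) / γ) Filter.atTop (nhds 0) := by
      simpa using hpow.div_const γ
    have := h1'.prodMk_nhds h2'
    refine this.congr fun n => ?_
    rw [gonW2_iter γ h0 h1 z n]
  · -- case |u| = 1/c  ⟹  |a| = 1
    intro h
    have heq : |a| = 1 := by
      rw [habs, h]; field_simp
    have hsq : a ^ 2 = 1 := by
      rw [← sq_abs, heq]; norm_num
    rw [← Filter.tendsto_add_atTop_iff_nat 2]
    have : (fun n : ℕ => (gonW2 γ)^[n + 2] z) =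
        fun _ : ℕ => ((1 / (1 - γ), 1 / γ) : ℝ × ℝ) := by
      funext n
      rw [show n + 2 = (n + 1) + 1 by ring, gonW2_iter γ h0 h1 z (n + 1)]
      have : a ^ 2 ^ (n + 1) = 1 := by
        rw [pow_succ, mul_comm, pow_mul, hsq, one_pow]
      rw [this]
    rw [this]
    exact tendsto_const_nhds
  · -- case |u| > 1/c  ⟹  |a| > 1
    intro h
    have hgt : 1 < |a| := by
      rw [habs]
      calc (1:ℝ) = γ * (1 - γ) * (1 / (γ * (1 - γ))) := by field_simp
        _ < γ * (1 - γ) * |z.1 * z.2| := mul_lt_mul_of_pos_left h hc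
    have hsq : 1 < a ^ 2 := by
      have := one_lt_pow₀ hgt (n := 2) (by norm_num)
      rwa [← abs_pow, abs_of_nonneg (sq_nonneg a)] at this
    have hpow : Filter.Tendsto (fun n : ℕ => (a ^ 2) ^ (2 ^ n)) Filter.atTop Filter.atTop :=
      (tendsto_pow_atTop_atTop_of_one_lt hsq).comp h2pow
    have key : ∀ n : ℕ, (gonW2 γ)^[n + 2] z =
        ((a ^ 2) ^ 2 ^ n / (1 - γ), (a ^ 2) ^ 2 ^ n / γ) := by
      intro n
      rw [show n + 2 = (n + 1) + 1 by ring, gonW2_iter γ h0 h1 z (n + 1)]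
      have hpe : a ^ 2 ^ (n + 1) = (a ^ 2) ^ 2 ^ n := by
        rw [← pow_mul, ← pow_succ']
      rw [hpe]
    constructor
    · rw [← Filter.tendsto_add_atTop_iff_nat 2]
      have := hpow.atTop_div_const (by linarith : (0:ℝ) < 1 - γ)
      refine this.congr fun n => ?_
      rw [key n]
    · rw [← Filter.tendsto_add_atTop_iff_nat 2]
      have := hpow.atTop_div_const h0
      refine this.congr fun n => ?_
      rw [key n]
  · -- normalization
    intro hz t ht
    obtain ⟨n, rfl⟩ := Nat.exists_eq_add_of_le ht
    rw [show 1 + n = n + 1 by ring, gonW2_iter γ h0 h1 z n]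
    have hane : a ≠ 0 := by
      rw [ha]; exact mul_ne_zero hc.ne' hz
    have hp : a ^ 2 ^ n ≠ 0 := pow_ne_zero _ hane
    have hsum : a ^ 2 ^ n / (1 - γ) + a ^ 2 ^ n / γ = a ^ 2 ^ n / (γ * (1 - γ)) := by
      field_simp; ring
    rw [hsum, Prod.smul_mk, smul_eq_mul, smul_eq_mul, Prod.mk.injEq]
    constructor <;> field_simp <;> simp only [ha] <;> ring
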